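/- For complex z with Re z > 0 and y > 0, the modified Bessel function of the first kind satisfies |I_z(y)| ≤ I_{Re z}(y) · e^{π |Im z| / 2}. -/

import Mathlib

open Complex

section AuxBessel
open Finset Filter Topology

lemma sinh_le_mul_exp {t : ℝ} : Real.sinh t ≤ t * Real.exp t := by
  rw [Real.sinh_eq, div_le_iff₀ (by norm_num : (0:ℝ) < 2)]
  have h : 1 - 2*t ≤ Real.exp (-(2*t)) := by
    have := Real.add_one_le_exp (-(2*t)); linarith
  have he : Real.exp (-t) = Real.exp t * Real.exp (-(2*t)) := by
    rw [← Real.exp_add]; ring_nf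
  have hp : (0:ℝ) < Real.exp t := Real.exp_pos t
  rw [he]
  nlinarith [mul_le_mul_of_nonneg_left h hp.le]

lemma normSq_Gamma_one_add (y : ℝ) (hy : y ≠ 0) :
    (Complex.normSq (Complex.Gamma (1 + y*I)) : ℂ) = (Real.pi * y / Real.sinh (Real.pi * y) : ℝ) := by
  have hconj : (starRingEnd ℂ) (1 + (y:ℂ)*I) = 1 - y*I := by
    simp [map_add, map_mul, Complex.conj_I]; ring
  have h1 : (Complex.normSq (Complex.Gamma (1 + y*I)) : ℂ)
      = Complex.Gamma (1 + y*I) * Complex.Gamma (1 - y*I) := by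
    rw [← Complex.mul_conj, ← Complex.Gamma_conj, hconj]
  have hyI : (y:ℂ)*I ≠ 0 := by
    simp [Complex.ext_iff, hy]
  have h2 : Complex.Gamma (1 + y*I) = (y*I) * Complex.Gamma (y*I) := by
    rw [add_comm]
    exact Complex.Gamma_add_one _ hyI
  have h3 : Complex.Gamma ((y:ℂ)*I) * Complex.Gamma (1 - y*I)
      = (Real.pi : ℂ) / Complex.sin (Real.pi * (y*I)) := by
    exact Complex.Gamma_mul_Gamma_one_sub _
  have h4 : Complex.sin ((Real.pi:ℂ) * (y*I)) = (Real.sinh (Real.pi * y) : ℝ) * I := by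
    rw [show (Real.pi:ℂ) * (y*I) = ((Real.pi * y : ℝ) : ℂ) * I by push_cast; ring,
      Complex.sin_mul_I, Complex.ofReal_sinh]
  have hsinh : Real.sinh (Real.pi * y) ≠ 0 := by
    rw [Real.sinh_ne_zero]
    exact mul_ne_zero Real.pi_ne_zero hy
  rw [h1, h2, mul_assoc, h3, h4]
  have hI : (I:ℂ) ≠ 0 := Complex.I_ne_zero
  field_simp
  ring_nf
  push_cast
  ring
open Complex

lemma norm_Gamma_one_add (y : ℝ) :
    Real.exp (-(Real.pi * |y| / 2)) ≤ ‖Complex.Gamma (1 + y*I)‖ := by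
  rcases eq_or_ne y 0 with rfl | hy
  · simp [Complex.Gamma_one]
  · have hns : Complex.normSq (Complex.Gamma (1 + y*I)) = Real.pi * y / Real.sinh (Real.pi * y) := by
      have := normSq_Gamma_one_add y hy
      exact_mod_cast this
    have habs : |y| = y ∨ |y| = -y := abs_choice y
    have hns' : Complex.normSq (Complex.Gamma (1 + y*I))
        = Real.pi * |y| / Real.sinh (Real.pi * |y|) := by
      rcases habs with h | h
      · rw [h]; exact hns
      · rw [h, hns]
        rw [show Real.pi * -y = -(Real.pi * y) by ring, Real.sinh_neg]
        field_simp
    set t := Real.pi * |y| with ht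
    have htpos : 0 < t := mul_pos Real.pi_pos (abs_pos.mpr hy)
    have hsinhpos : 0 < Real.sinh t := Real.sinh_pos_iff.mpr htpos
    have hkey : Real.exp (-t) ≤ t / Real.sinh t := by
      rw [le_div_iff₀ hsinhpos]
      calc Real.exp (-t) * Real.sinh t ≤ Real.exp (-t) * (t * Real.exp t) := by
            exact mul_le_mul_of_nonneg_left sinh_le_mul_exp (Real.exp_pos _).le
        _ = t := by rw [← mul_assoc, mul_comm (Real.exp (-t)), mul_assoc, ← Real.exp_add]; simp
    have : Real.exp (-(t/2)) ≤ ‖Complex.Gamma (1 + y*I)‖ := by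
      rw [Complex.norm_def, hns']
      rw [show -(t/2) = (-t)/2 by ring, Real.exp_half]
      exact Real.sqrt_le_sqrt hkey
    convert this using 2

lemma norm_GammaSeq {s : ℂ} {n : ℕ} (hn : 0 < n) :
    ‖Complex.GammaSeq s n‖ = (n:ℝ)^s.re * n.factorial / ∏ j ∈ Finset.range (n+1), ‖s + j‖ := by
  rw [Complex.GammaSeq, norm_div, norm_mul, norm_prod,
    Complex.norm_natCast_cpow_of_pos hn, Complex.norm_natCast]

lemma norm_add_mul_I_nat (a b : ℝ) (j : ℕ) :
    ‖((a:ℂ) + b*I) + j‖ = Real.sqrt ((a+j)^2 + b^2) := by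
  rw [show ((a:ℂ)+b*I)+j = ((a+j:ℝ):ℂ) + (b:ℝ)*I by push_cast; ring,
    Complex.norm_add_mul_I]

lemma norm_real_add_nat (a : ℝ) (ha : 0 ≤ a) (j : ℕ) : ‖(a:ℂ) + j‖ = a + j := by
  rw [show (a:ℂ)+j = ((a+j:ℝ):ℂ) by push_cast; ring, Complex.norm_real,
    Real.norm_eq_abs]
  exact abs_of_nonneg (by positivity)

lemma per_factor (x y : ℝ) (hx : 1 ≤ x) (j : ℕ) :
    Real.sqrt ((x+j)^2 + y^2) * (1+j) ≤ Real.sqrt ((1+j)^2 + y^2) * (x+j) := by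
  have h1 : (0:ℝ) < 1 + j := by positivity
  have h2 : (0:ℝ) < x + j := by have : (0:ℝ) ≤ j := j.cast_nonneg; linarith
  have e1 : Real.sqrt ((x+j)^2+y^2)*(1+j) = Real.sqrt (((x+j)^2+y^2)*(1+j)^2) := by
    rw [Real.sqrt_mul (by positivity), Real.sqrt_sq h1.le]
  have e2 : Real.sqrt ((1+j)^2+y^2)*(x+j) = Real.sqrt (((1+j)^2+y^2)*(x+j)^2) := by
    rw [Real.sqrt_mul (by positivity), Real.sqrt_sq h2.le]
  rw [e1, e2]
  apply Real.sqrt_le_sqrt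
  have h3 : (1+(j:ℝ))^2 ≤ (x+j)^2 := by nlinarith
  nlinarith [mul_le_mul_of_nonneg_left h3 (sq_nonneg y)]

lemma per_n (x y : ℝ) (hx : 1 ≤ x) {n : ℕ} (hn : 0 < n) :
    ‖Complex.GammaSeq (1 + y*I) n‖ * ‖Complex.GammaSeq (x:ℂ) n‖
      ≤ ‖Complex.GammaSeq ((x:ℂ) + y*I) n‖ * ‖Complex.GammaSeq 1 n‖ := by
  have hxpos : (0:ℝ) < x := lt_of_lt_of_le one_pos hx
  rw [norm_GammaSeq hn, norm_GammaSeq hn, norm_GammaSeq hn, norm_GammaSeq hn]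
  have hre1 : ((1:ℂ) + y*I).re = 1 := by simp
  have hrex : ((x:ℂ) + y*I).re = x := by simp
  rw [hre1, hrex, Complex.ofReal_re, Complex.one_re]
  have h1eq : (1:ℂ) + (y:ℂ)*I = ((1:ℝ):ℂ) + (y:ℂ)*I := by norm_num
  -- products
  set P1 := ∏ j ∈ Finset.range (n+1), ‖(1:ℂ) + y*I + j‖ with hP1
  set Px := ∏ j ∈ Finset.range (n+1), ‖(x:ℂ) + j‖ with hPx
  set Pz := ∏ j ∈ Finset.range (n+1), ‖(x:ℂ) + y*I + j‖ with hPz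
  set Q1 := ∏ j ∈ Finset.range (n+1), ‖(1:ℂ) + j‖ with hQ1
  have hP1pos : 0 < P1 := Finset.prod_pos (fun j _ => by
    rw [h1eq, norm_add_mul_I_nat]; positivity)
  have hPxpos : 0 < Px := Finset.prod_pos (fun j _ => by
    rw [norm_real_add_nat x hxpos.le]; positivity)
  have hPzpos : 0 < Pz := Finset.prod_pos (fun j _ => by
    rw [norm_add_mul_I_nat]; positivity)
  have hQ1pos : 0 < Q1 := Finset.prod_pos (fun j _ => by
    rw [show (1:ℂ) = ((1:ℝ):ℂ) by norm_num, norm_real_add_nat 1 one_pos.le]; positivity)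
  have key : Pz * Q1 ≤ P1 * Px := by
    rw [hPz, hQ1, hP1, hPx, ← Finset.prod_mul_distrib, ← Finset.prod_mul_distrib]
    apply Finset.prod_le_prod
    · intro j _; positivity
    · intro j _
      rw [norm_add_mul_I_nat, h1eq, norm_add_mul_I_nat, norm_real_add_nat x hxpos.le,
        show (1:ℂ) = ((1:ℝ):ℂ) by norm_num, norm_real_add_nat 1 one_pos.le]
      exact per_factor x y hx j
  have hN1 : (0:ℝ) < (n:ℝ)^(1:ℝ) * n.factorial := by
    have := Real.rpow_pos_of_pos (Nat.cast_pos.mpr hn) (1:ℝ)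
    have : (0:ℝ) < n.factorial := by exact_mod_cast n.factorial_pos
    positivity
  have hNx : (0:ℝ) < (n:ℝ)^x * n.factorial := by
    have := Real.rpow_pos_of_pos (Nat.cast_pos.mpr hn) x
    have : (0:ℝ) < n.factorial := by exact_mod_cast n.factorial_pos
    positivity
  rw [div_mul_div_comm, div_mul_div_comm, div_le_div_iff₀ (by positivity) (by positivity)]
  calc (n:ℝ)^(1:ℝ) * n.factorial * ((n:ℝ)^x * n.factorial) * (Pz * Q1)
      ≤ (n:ℝ)^(1:ℝ) * n.factorial * ((n:ℝ)^x * n.factorial) * (P1 * Px) := by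
        exact mul_le_mul_of_nonneg_left key (by positivity)
    _ = (n:ℝ)^x * n.factorial * ((n:ℝ)^(1:ℝ) * n.factorial) * (P1 * Px) := by ring

lemma gamma_ratio (x y : ℝ) (hx : 1 ≤ x) :
    ‖Complex.Gamma (1+y*I)‖ * Real.Gamma x ≤ ‖Complex.Gamma ((x:ℂ)+y*I)‖ := by
  have hxpos : (0:ℝ) < x := lt_of_lt_of_le one_pos hx
  have hGx : ‖Complex.Gamma (x:ℂ)‖ = Real.Gamma x := by
    rw [Complex.Gamma_ofReal, Complex.norm_real, Real.norm_eq_abs,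
      abs_of_pos (Real.Gamma_pos_of_pos hxpos)]
  have h1 : Tendsto (fun n => ‖Complex.GammaSeq (1+y*I) n‖ * ‖Complex.GammaSeq (x:ℂ) n‖)
      atTop (𝓝 (‖Complex.Gamma (1+y*I)‖ * Real.Gamma x)) := by
    rw [← hGx]
    exact ((Complex.GammaSeq_tendsto_Gamma _).norm.mul (Complex.GammaSeq_tendsto_Gamma _).norm)
  have h2 : Tendsto (fun n => ‖Complex.GammaSeq ((x:ℂ)+y*I) n‖ * ‖Complex.GammaSeq 1 n‖)
      atTop (𝓝 (‖Complex.Gamma ((x:ℂ)+y*I)‖)) := by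
    have := ((Complex.GammaSeq_tendsto_Gamma ((x:ℂ)+y*I)).norm.mul
      (Complex.GammaSeq_tendsto_Gamma 1).norm)
    simpa [Complex.Gamma_one] using this
  exact le_of_tendsto_of_tendsto h1 h2 (eventually_atTop.mpr ⟨1, fun n hn => per_n x y hx hn⟩)

lemma gamma_lower (x y : ℝ) (hx : 1 ≤ x) :
    Real.Gamma x ≤ Real.exp (Real.pi * |y| / 2) * ‖Complex.Gamma ((x:ℂ)+y*I)‖ := by
  have h1 := gamma_ratio x y hx
  have h2 := norm_Gamma_one_add y
  have hxpos : (0:ℝ) < Real.Gamma x := Real.Gamma_pos_of_pos (lt_of_lt_of_le one_pos hx)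
  have h3 : Real.exp (-(Real.pi * |y| / 2)) * Real.Gamma x ≤ ‖Complex.Gamma ((x:ℂ)+y*I)‖ :=
    le_trans (mul_le_mul_of_nonneg_right h2 hxpos.le) h1
  calc Real.Gamma x
      = Real.exp (Real.pi * |y| / 2) * (Real.exp (-(Real.pi * |y| / 2)) * Real.Gamma x) := by
        rw [← mul_assoc, ← Real.exp_add]; simp
    _ ≤ Real.exp (Real.pi * |y| / 2) * ‖Complex.Gamma ((x:ℂ)+y*I)‖ :=
        mul_le_mul_of_nonneg_left h3 (Real.exp_pos _).le

lemma gamma_fact (x : ℝ) (hx : 0 < x) (k : ℕ) :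
    (k.factorial : ℝ) * Real.Gamma (x+1) ≤ Real.Gamma (x+k+1) := by
  induction k with
  | zero => simp
  | succ k ih =>
    have hpos : (0:ℝ) < x + k + 1 := by positivity
    have h1 : Real.Gamma (x+((k+1:ℕ):ℝ)+1) = (x+k+1) * Real.Gamma (x+k+1) := by
      push_cast
      rw [show x+((k:ℝ)+1)+1 = (x+(k:ℝ)+1)+1 by ring, Real.Gamma_add_one hpos.ne']
    rw [h1]
    have h2 : ((k+1:ℕ):ℝ) * ((k.factorial:ℝ) * Real.Gamma (x+1)) ≤ (x+k+1) * Real.Gamma (x+k+1) := by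
      apply mul_le_mul
      · push_cast; linarith
      · exact ih
      · positivity
      · positivity
    calc ((k+1).factorial : ℝ) * Real.Gamma (x+1)
        = ((k+1:ℕ):ℝ) * ((k.factorial:ℝ) * Real.Gamma (x+1)) := by
          rw [Nat.factorial_succ]; push_cast; ring
      _ ≤ _ := h2

set_option maxHeartbeats 1000000 in
lemma summable_a (x y : ℝ) (hx : 0 < x) (hy : 0 < y) :
    Summable (fun k : ℕ => (y/2)^(x+2*(k:ℝ)) / (k.factorial * Real.Gamma (x+(k:ℝ)+1))) := by
  have hy2 : (0:ℝ) < y/2 := by linarith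
  have hGpos : ∀ k : ℕ, (0:ℝ) < Real.Gamma (x+(k:ℝ)+1) := fun k =>
    Real.Gamma_pos_of_pos (by positivity)
  have hG1 : (0:ℝ) < Real.Gamma (x+1) := Real.Gamma_pos_of_pos (by linarith)
  refine Summable.of_nonneg_of_le ?_ ?_
    ((Real.summable_pow_div_factorial ((y/2)^2)).mul_left ((y/2)^x / Real.Gamma (x+1)))
  · intro k
    have hfk : (0:ℝ) < (k.factorial : ℝ) := by exact_mod_cast k.factorial_pos
    have := hGpos k
    positivity
  · intro k
    have hfk : (0:ℝ) < (k.factorial : ℝ) := by exact_mod_cast k.factorial_pos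
    have hsplit : (y/2)^(x+2*(k:ℝ)) = (y/2)^x * ((y/2)^2)^k := by
      rw [Real.rpow_add hy2, show (2*(k:ℝ)) = ((2*k : ℕ):ℝ) by push_cast; ring,
        Real.rpow_natCast, pow_mul]
    rw [hsplit, div_le_iff₀ (by have := hGpos k; positivity)]
    have hden : (k.factorial : ℝ) * Real.Gamma (x+1) ≤ Real.Gamma (x+(k:ℝ)+1) := gamma_fact x hx k
    have hone : (1:ℝ) ≤ (k.factorial : ℝ) := by exact_mod_cast k.factorial_pos
    calc (y/2)^x * ((y/2)^2)^k
        = ((y/2)^x / Real.Gamma (x+1) * (((y/2)^2)^k / k.factorial)) * (k.factorial * Real.Gamma (x+1)) := by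
          field_simp
      _ ≤ ((y/2)^x / Real.Gamma (x+1) * (((y/2)^2)^k / k.factorial)) * (k.factorial * Real.Gamma (x+(k:ℝ)+1)) := by
          apply mul_le_mul_of_nonneg_left _ (by positivity)
          exact hden.trans (le_mul_of_one_le_left (hGpos k).le hone)

end AuxBessel

/-- Modified Bessel function of the first kind of complex order z at real argument y,
I_z(y) = Σ_{k≥0} (y/2)^{z+2k} / (k! Γ(z+k+1)). -/
noncomputable def besselI (z : ℂ) (y : ℝ) : ℂ :=
  ∑' k : ℕ, ((y:ℂ)/2) ^ (z + 2*(k:ℂ)) / ((k.factorial : ℂ) * Complex.Gamma (z + k + 1))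

/-- for Re z > 0 and y > 0, |I_z(y)| ≤ I_{Re z}(y) · e^{π |Im z|/2}.
Here I_{Re z}(y) is real and positive, expressed as the real part of `besselI` at real order. -/
theorem besselI_norm_le (z : ℂ) (hz : 0 < z.re) (y : ℝ) (hy : 0 < y) :
    ‖besselI z y‖ ≤ (besselI (z.re : ℂ) y).re * Real.exp (Real.pi * |z.im| / 2) := by
  have hy2 : (0:ℝ) < y/2 := by linarith
  set x := z.re with hx
  set v := z.im with hv
  set c := Real.pi * |v| / 2 with hc
  set a : ℕ → ℝ := fun k => (y/2)^(x+2*(k:ℝ)) / (k.factorial * Real.Gamma (x+(k:ℝ)+1)) with haa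
  have ha : Summable a := summable_a x y hz hy
  have hGpos : ∀ k : ℕ, (0:ℝ) < Real.Gamma (x+(k:ℝ)+1) := fun k =>
    Real.Gamma_pos_of_pos (by positivity)
  -- real-order besselI
  have hre : (besselI (x:ℂ) y).re = ∑' k, a k := by
    have hterm_eq : ∀ k : ℕ,
        ((y:ℂ)/2) ^ ((x:ℂ) + 2*(k:ℂ)) / ((k.factorial : ℂ) * Complex.Gamma ((x:ℂ) + k + 1))
          = ((a k : ℝ) : ℂ) := by
      intro k
      have h1 : ((y:ℂ)/2) ^ ((x:ℂ) + 2*(k:ℂ)) = (((y/2)^(x+2*(k:ℝ)) : ℝ) : ℂ) := by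
        rw [Complex.ofReal_cpow hy2.le]
        push_cast
        ring_nf
      have h2 : Complex.Gamma ((x:ℂ) + k + 1) = ((Real.Gamma (x+(k:ℝ)+1) : ℝ) : ℂ) := by
        rw [show ((x:ℂ) + k + 1) = (((x+(k:ℝ)+1 : ℝ)) : ℂ) by push_cast; ring,
          Complex.Gamma_ofReal]
      rw [h1, h2, haa]
      push_cast
      ring
    rw [besselI]
    simp_rw [hterm_eq]
    rw [← Complex.ofReal_tsum]
    exact Complex.ofReal_re _
  -- term bound
  have hterm : ∀ k : ℕ,
      ‖((y:ℂ)/2) ^ (z + 2*(k:ℂ)) / ((k.factorial : ℂ) * Complex.Gamma (z + k + 1))‖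
        ≤ Real.exp c * a k := by
    intro k
    have hfk : (0:ℝ) < (k.factorial : ℝ) := by exact_mod_cast k.factorial_pos
    have hnum : ‖((y:ℂ)/2) ^ (z + 2*(k:ℂ))‖ = (y/2)^(x+2*(k:ℝ)) := by
      rw [show (y:ℂ)/2 = ((y/2 : ℝ):ℂ) by push_cast; ring,
        Complex.norm_cpow_eq_rpow_re_of_pos hy2]
      congr 1
      simp [hx]
    have hzk : z + k + 1 = ((x+(k:ℝ)+1 : ℝ):ℂ) + v*I := by
      rw [← Complex.re_add_im z, ← hx, ← hv]
      push_cast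
      ring_nf
    have hx1 : (1:ℝ) ≤ x + (k:ℝ) + 1 := by
      have : (0:ℝ) ≤ (k:ℝ) := Nat.cast_nonneg k
      linarith
    have hGlow : Real.exp (-c) * Real.Gamma (x+(k:ℝ)+1) ≤ ‖Complex.Gamma (z+k+1)‖ := by
      rw [hzk]
      have h := gamma_lower (x+(k:ℝ)+1) v hx1
      rw [← hc] at h
      rw [Real.exp_neg, inv_mul_le_iff₀ (Real.exp_pos _)]
      exact h
    rw [norm_div, norm_mul, hnum, Complex.norm_natCast]
    have hGn : (0:ℝ) < ‖Complex.Gamma (z+k+1)‖ :=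
      lt_of_lt_of_le (by have := hGpos k; positivity) hGlow
    calc (y/2)^(x+2*(k:ℝ)) / ((k.factorial : ℝ) * ‖Complex.Gamma (z+k+1)‖)
        ≤ (y/2)^(x+2*(k:ℝ)) / ((k.factorial : ℝ) * (Real.exp (-c) * Real.Gamma (x+(k:ℝ)+1))) := by
          apply div_le_div_of_nonneg_left (by positivity)
            (by have := hGpos k; positivity)
          exact mul_le_mul_of_nonneg_left hGlow hfk.le
      _ = Real.exp c * a k := by
          rw [haa]
          simp only
          rw [Real.exp_neg]
          have := hGpos k
          field_simp
  -- conclusion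
  have hsn : Summable (fun k : ℕ =>
      ‖((y:ℂ)/2) ^ (z + 2*(k:ℂ)) / ((k.factorial : ℂ) * Complex.Gamma (z + k + 1))‖) :=
    Summable.of_nonneg_of_le (fun k => norm_nonneg _) hterm (ha.mul_left _)
  calc ‖besselI z y‖
      ≤ ∑' k : ℕ, ‖((y:ℂ)/2) ^ (z + 2*(k:ℂ)) / ((k.factorial : ℂ) * Complex.Gamma (z + k + 1))‖ :=
        norm_tsum_le_tsum_norm hsn
    _ ≤ ∑' k : ℕ, Real.exp c * a k := hsn.tsum_le_tsum hterm (ha.mul_left _)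
    _ = Real.exp c * ∑' k, a k := tsum_mul_left
    _ = (∑' k, a k) * Real.exp c := mul_comm _ _
    _ = (besselI (x:ℂ) y).re * Real.exp c := by rw [hre]
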